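/- Let G be a torsion-free abelian group, n a positive integer, and A, B finite nonempty multisets with elements in G. If nA = nB, where nX denotes the n-fold pairwise-sum X + X + ... + X, then A = B. -/

import Mathlib

/-- Pairwise sum of multisets over an additive group. -/
def pSum {G : Type*} [AddCommGroup G] (A B : Multiset G) : Multiset G :=
  (A.product B).map fun p => p.1 + p.2

/-- `nSum n A` is the `n`-fold pairwise sum `A + A + ⋯ + A` (with `nSum 0 A = {0}`). -/
def nSum {G : Type*} [AddCommGroup G] : ℕ → Multiset G → Multiset G
  | 0, _ => {0}
  | n + 1, A => pSum A (nSum n A)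

lemma uniqueSums_of_torsionFree {G : Type*} [AddCommGroup G]
    (hG : ∀ g : G, g ≠ 0 → ¬IsOfFinAddOrder g) : UniqueSums G := by
  haveI : IsAddTorsionFree G := IsAddTorsionFree.of_not_isOfFinAddOrder hG
  set S := nonZeroDivisors ℤ
  haveI : CharZero (Localization S) :=
    charZero_of_injective_algebraMap (IsFractionRing.injective ℤ (Localization S))
  letI : Module ℚ (LocalizedModule S G) :=
    Module.compHom (LocalizedModule S G) (algebraMap ℚ (Localization S))
  let f : G →+ LocalizedModule S G :=
    { toFun := fun m => LocalizedModule.mk m 1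
      map_zero' := by show LocalizedModule.mk 0 1 = 0; rw [LocalizedModule.zero_mk]
      map_add' := fun m m' => by
        show LocalizedModule.mk (m + m') 1 = LocalizedModule.mk m 1 + LocalizedModule.mk m' 1
        rw [LocalizedModule.mk_add_mk]; simp }
  have hinj : Function.Injective f := by
    rw [injective_iff_map_eq_zero]
    intro m hm
    have h0 : LocalizedModule.mk m (1 : S) = LocalizedModule.mk (0 : G) (1 : S) := by
      simpa [f, LocalizedModule.zero_mk] using hm
    rw [LocalizedModule.mk_eq] at h0
    obtain ⟨u, hu⟩ := h0
    have hu' : (u : ℤ) • m = 0 := by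
      simpa [Submonoid.smul_def] using hu
    have hne : (u : ℤ) ≠ 0 := nonZeroDivisors.ne_zero u.2
    simpa [hne] using (smul_eq_zero.mp hu')
  exact UniqueSums.of_injective_addHom f.toAddHom hinj inferInstance

namespace MDBN

variable {G : Type*} [AddCommGroup G]

noncomputable def phi (A : Multiset G) : AddMonoidAlgebra ℚ G :=
  (A.map fun a => AddMonoidAlgebra.single a (1 : ℚ)).sum

@[simp] lemma phi_zero : phi (0 : Multiset G) = 0 := by
  simp [phi]

@[simp] lemma phi_cons (a : G) (A : Multiset G) :
    phi (a ::ₘ A) = AddMonoidAlgebra.single a 1 + phi A := by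
  simp [phi]

lemma phi_apply [DecidableEq G] (A : Multiset G) (g : G) : (phi A).coeff g = A.count g := by
  induction A using Multiset.induction_on with
  | empty => simp [phi]
  | cons a A ih =>
    rw [phi_cons]
    show (AddMonoidAlgebra.single a (1:ℚ) + phi A).coeff g = _
    rw [AddMonoidAlgebra.coeff_add, Finsupp.add_apply, ih, AddMonoidAlgebra.coeff_single, Finsupp.single_apply, Multiset.count_cons]
    by_cases h : a = g
    · simp [h, add_comm]
    · simp [h, Ne.symm h]

lemma phi_nonneg (A : Multiset G) (g : G) : 0 ≤ (phi A).coeff g := by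
  classical
  rw [phi_apply]
  exact_mod_cast Nat.zero_le _

lemma phi_ne_zero {A : Multiset G} (hA : A ≠ 0) : phi A ≠ 0 := by
  classical
  obtain ⟨a, ha⟩ := Multiset.exists_mem_of_ne_zero hA
  intro h
  have := phi_apply A a
  rw [h] at this
  simp only [AddMonoidAlgebra.coeff_zero, Finsupp.coe_zero, Pi.zero_apply] at this
  have h2 := Multiset.count_pos.mpr ha
  have : Multiset.count a A = 0 := by exact_mod_cast this.symm
  omega

lemma mul_nonneg_coeff {f g : AddMonoidAlgebra ℚ G}
    (hf : ∀ x, 0 ≤ f.coeff x) (hg : ∀ x, 0 ≤ g.coeff x) (x : G) : 0 ≤ (f * g).coeff x := by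
  classical
  rw [AddMonoidAlgebra.coeff_mul]
  simp only [Finsupp.sum]
  refine Finset.sum_nonneg fun a1 _ => Finset.sum_nonneg fun a2 _ => ?_
  split
  · exact mul_nonneg (hf a1) (hg a2)
  · exact le_refl _

lemma one_nonneg_coeff (x : G) : 0 ≤ (1 : AddMonoidAlgebra ℚ G).coeff x := by
  classical
  rw [AddMonoidAlgebra.one_def]
  show 0 ≤ (AddMonoidAlgebra.single (0:G) (1:ℚ)).coeff x
  rw [AddMonoidAlgebra.coeff_single, Finsupp.single_apply]
  split <;> norm_num

lemma pow_nonneg_coeff {f : AddMonoidAlgebra ℚ G} (hf : ∀ x, 0 ≤ f.coeff x) (k : ℕ) (x : G) :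
    0 ≤ (f ^ k).coeff x := by
  induction k generalizing x with
  | zero => rw [pow_zero]; exact one_nonneg_coeff x
  | succ k ih => rw [pow_succ]; exact mul_nonneg_coeff ih hf x

lemma single_mul_phi (a : G) (B : Multiset G) :
    AddMonoidAlgebra.single a (1:ℚ) * phi B
      = (B.map fun b => AddMonoidAlgebra.single (a + b) (1:ℚ)).sum := by
  rw [phi, ← Multiset.sum_map_mul_left]
  congr 1
  refine Multiset.map_congr rfl fun b _ => ?_
  simp [AddMonoidAlgebra.single_mul_single]

lemma phi_pSum (A B : Multiset G) : phi (pSum A B) = phi A * phi B := by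
  have key : ∀ A : Multiset G, phi ((A ×ˢ B).map fun p => p.1 + p.2) = phi A * phi B := by
    intro A
    induction A using Multiset.induction_on with
    | empty => simp [Multiset.zero_product]
    | cons a A ih =>
      rw [Multiset.cons_product, Multiset.map_add, Multiset.map_map, phi, Multiset.map_add,
        Multiset.sum_add, phi_cons, add_mul, single_mul_phi]
      rw [phi] at ih
      rw [ih, Multiset.map_map]
      rfl
  exact key A

lemma phi_nSum (n : ℕ) (A : Multiset G) : phi (nSum n A) = phi A ^ n := by
  induction n with
  | zero =>
    show phi ({0} : Multiset G) = 1
    rw [show ({0} : Multiset G) = (0 : G) ::ₘ 0 from rfl, phi_cons, phi_zero, add_zero,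
      ← AddMonoidAlgebra.one_def]
  | succ n ih =>
    rw [nSum, phi_pSum, ih, pow_succ, mul_comm]

end MDBN

theorem multiset_div_by_n {G : Type*} [AddCommGroup G]
    (hG : ∀ g : G, g ≠ 0 → ¬IsOfFinAddOrder g)
    (n : ℕ) (hn : 0 < n)
    (A B : Multiset G) (hA : A ≠ 0) (hB : B ≠ 0)
    (h : nSum n A = nSum n B) : A = B := by
  classical
  haveI : UniqueSums G := uniqueSums_of_torsionFree hG
  set x := MDBN.phi A with hx
  set y := MDBN.phi B with hy
  have hxy : x ^ n = y ^ n := by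
    rw [hx, hy, ← MDBN.phi_nSum, ← MDBN.phi_nSum, h]
  have hx0 : x ≠ 0 := MDBN.phi_ne_zero hA
  have hy0 : y ≠ 0 := MDBN.phi_ne_zero hB
  have hgeom : (∑ i ∈ Finset.range n, x ^ i * y ^ (n - 1 - i)) * (x - y) = 0 := by
    rw [geom_sum₂_mul, hxy, sub_self]
  have hxnn : ∀ g, 0 ≤ x.coeff g := MDBN.phi_nonneg A
  have hynn : ∀ g, 0 ≤ y.coeff g := MDBN.phi_nonneg B
  have hS : (∑ i ∈ Finset.range n, x ^ i * y ^ (n - 1 - i)) ≠ 0 := by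
    have h1 : y ^ (n - 1) ≠ 0 := pow_ne_zero _ hy0
    obtain ⟨g, hg⟩ := Finsupp.ne_iff.mp (by simpa using h1 : (y ^ (n - 1)).coeff ≠ 0)
    simp only [Finsupp.coe_zero, Pi.zero_apply] at hg
    intro hS0
    have happ : (∑ i ∈ Finset.range n, x ^ i * y ^ (n - 1 - i)).coeff g
        = ∑ i ∈ Finset.range n, (x ^ i * y ^ (n - 1 - i) : AddMonoidAlgebra ℚ G).coeff g := by
      rw [AddMonoidAlgebra.coeff_sum]; exact Finsupp.finset_sum_apply _ _ _
    have hpos : 0 < ∑ i ∈ Finset.range n, (x ^ i * y ^ (n - 1 - i) : AddMonoidAlgebra ℚ G).coeff g := by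
      refine Finset.sum_pos' (fun i _ => MDBN.mul_nonneg_coeff (MDBN.pow_nonneg_coeff hxnn i)
          (MDBN.pow_nonneg_coeff hynn (n - 1 - i)) g) ⟨0, Finset.mem_range.mpr hn, ?_⟩
      have : (x ^ 0 * y ^ (n - 1 - 0) : AddMonoidAlgebra ℚ G) = y ^ (n - 1) := by
        rw [Nat.sub_zero, pow_zero, one_mul]
      rw [this]
      exact lt_of_le_of_ne (MDBN.pow_nonneg_coeff hynn (n - 1) g) (Ne.symm hg)
    rw [hS0] at happ
    simp only [AddMonoidAlgebra.coeff_zero, Finsupp.coe_zero, Pi.zero_apply] at happ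
    rw [← happ] at hpos
    exact lt_irrefl 0 hpos
  have hsub : x - y = 0 := by
    rcases mul_eq_zero.mp hgeom with h' | h'
    · exact absurd h' hS
    · exact h'
  have hxy' : x = y := sub_eq_zero.mp hsub
  ext g
  have := congrArg (fun f : AddMonoidAlgebra ℚ G => f.coeff g) hxy'
  simp only [hx, hy, MDBN.phi_apply] at this
  exact_mod_cast this
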